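/- Generalized kernel of −Δ + V in eight dimensions: in the radial setting on ℝ⁸, there exist a radial solution Γ of −Γ'' − (7/r)Γ' + VΓ = 0 on (0,∞) and nonzero constants c, c' with Γ(r) ∼ c r^{−6} as r → 0 and Γ(r) → c' as r → ∞; and there exist radial functions T₁^∞ and T₁⁰ on (0,∞) solving −(T₁^∞)'' − (7/r)(T₁^∞)' + V T₁^∞ = −ΛW and −(T₁⁰)'' − (7/r)(T₁⁰)' + V T₁⁰ = −Γ, together with nonzero constants c^∞_{1,0}, c^∞_{1,∞}, c⁰_{1,0}, c⁰_{1,∞}, e⁰₀, c̃⁰_{0,0}, such that T₁^∞(r) ∼ c^∞_{1,∞} r^{−4} as r → ∞, T₁^∞(r) ∼ c^∞_{1,0} r^{−6} as r → 0, T₁⁰(r) ∼ c⁰_{1,∞} r² as r → ∞, T₁⁰(r) ∼ c⁰_{1,0} r^{−4} as r → 0, and Γ(r) − e⁰₀ T₁^∞(r) ∼ c̃⁰_{0,0} r² as r → 0. -/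

import Mathlib

open MeasureTheory Real Filter Set Topology

noncomputable section

/-- The radial profile of the ground state on `ℝ⁸`: `W(r) = (1+r²/48)⁻³`. -/
def W8r (r : ℝ) : ℝ := ((1 + r ^ 2 / 48) ^ 3)⁻¹

/-- The radial potential `V = -(5/3) W^{2/3}` on `ℝ⁸`. -/
def V8r (r : ℝ) : ℝ := -(5 / 3) * W8r r ^ ((2 : ℝ) / 3)

/-- `ΛW(r) = r W'(r) + 3W(r)` on `ℝ⁸`. -/
def LW8r (r : ℝ) : ℝ := r * deriv W8r r + 3 * W8r r


def pG : ℝ → ℝ := fun x => 587068342272 + 171228266496 * x ^ 2 + 32105299968 * x ^ 4 + 334430208 * x ^ 6 + (-123088896) * x ^ 8 + 290304 * x ^ 10 + 672 * x ^ 12 + 1 * x ^ 14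

def qG : ℝ → ℝ := fun x => (-4459069440) * x ^ 6 + 92897280 * x ^ 8

def pG1 : ℝ → ℝ := fun x => (-169075682574336) + (-41094783959040) * x ^ 2 + (-5136847994880) * x ^ 4 + (-535088332800) * x ^ 6 + (-14491975680) * x ^ 8 + 887169024 * x ^ 10 + (-967680) * x ^ 12 + (-960) * x ^ 14

def qG1 : ℝ → ℝ := fun x => 44590694400 * x ^ 8 + (-557383680) * x ^ 10

def pG2 : ℝ → ℝ := fun x => 56809429344976896 + 12737034753933312 * x ^ 2 + 1356127870648320 * x ^ 4 + 92463263907840 * x ^ 6 + 7330710159360 * x ^ 8 + 276016398336 * x ^ 10 + (-6999810048) * x ^ 12 + 4515840 * x ^ 14 + 2880 * x ^ 16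

def qG2 : ℝ → ℝ := fun x => 2140353331200 * x ^ 8 + (-481579499520) * x ^ 10 + 3901685760 * x ^ 12

def dpG : ℝ → ℝ := fun x => 342456532992 * x + 128421199872 * x ^ 3 + 2006581248 * x ^ 5 + (-984711168) * x ^ 7 + 2903040 * x ^ 9 + 8064 * x ^ 11 + 14 * x ^ 13

def dqG : ℝ → ℝ := fun x => (-26754416640) * x ^ 5 + 743178240 * x ^ 7

def dpG1 : ℝ → ℝ := fun x => (-82189567918080) * x + (-20547391979520) * x ^ 3 + (-3210529996800) * x ^ 5 + (-115935805440) * x ^ 7 + 8871690240 * x ^ 9 + (-11612160) * x ^ 11 + (-13440) * x ^ 13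

def dqG1 : ℝ → ℝ := fun x => 356725555200 * x ^ 7 + (-5573836800) * x ^ 9

def pT1 : ℝ → ℝ := fun x => (587068342272/7) + 24461180928 * x ^ 2 + 4586471424 * x ^ 4 + 47775744 * x ^ 6 + (-16588800) * x ^ 8 + 41472 * x ^ 10

def qT1 : ℝ → ℝ := fun x => (-637009920) * x ^ 6 + 13271040 * x ^ 8

def pT11 : ℝ → ℝ := fun x => (-169075682574336/7) + (-5870683422720) * x ^ 2 + (-733835427840) * x ^ 4 + (-76441190400) * x ^ 6 + (-1974730752) * x ^ 8 + 120766464 * x ^ 10 + (-165888) * x ^ 12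

def qT11 : ℝ → ℝ := fun x => 6370099200 * x ^ 8 + (-79626240) * x ^ 10

def pT12 : ℝ → ℝ := fun x => 8115632763568128 + (12737034753933312/7) * x ^ 2 + 193732552949760 * x ^ 4 + 13209037701120 * x ^ 6 + 1051830779904 * x ^ 8 + 37710987264 * x ^ 10 + (-964804608) * x ^ 12 + 829440 * x ^ 14

def qT12 : ℝ → ℝ := fun x => 305764761600 * x ^ 8 + (-68797071360) * x ^ 10 + 557383680 * x ^ 12

def dpT1 : ℝ → ℝ := fun x => 48922361856 * x + 18345885696 * x ^ 3 + 286654464 * x ^ 5 + (-132710400) * x ^ 7 + 414720 * x ^ 9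

def dqT1 : ℝ → ℝ := fun x => (-3822059520) * x ^ 5 + 106168320 * x ^ 7

def dpT11 : ℝ → ℝ := fun x => (-11741366845440) * x + (-2935341711360) * x ^ 3 + (-458647142400) * x ^ 5 + (-15797846016) * x ^ 7 + 1207664640 * x ^ 9 + (-1990656) * x ^ 11

def dqT11 : ℝ → ℝ := fun x => 50960793600 * x ^ 7 + (-796262400) * x ^ 9

def pT0 : ℝ → ℝ := fun x => (-73383542784) + (-36691771392) * x ^ 2 + 524427264 * x ^ 6 + (-4492800) * x ^ 8 + (-48704) * x ^ 10 + (-91/3) * x ^ 12 + (1/16) * x ^ 14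

def qT0 : ℝ → ℝ := fun x => 11041505280 * x ^ 4 + (-508723200) * x ^ 6 + 26880 * x ^ 10 + 40 * x ^ 12

def pT01 : ℝ → ℝ := fun x => 14089640214528 + 4403012567040 * x ^ 2 + 896909967360 * x ^ 4 + 36967809024 * x ^ 6 + (-4517904384) * x ^ 8 + 5234688 * x ^ 10 + 114560 * x ^ 12 + 70 * x ^ 14 + (1/8) * x ^ 16

def qT01 : ℝ → ℝ := fun x => (-137169469440) * x ^ 6 + 3052339200 * x ^ 8 + 7741440 * x ^ 10 + (-38400) * x ^ 12

def pT02 : ℝ → ℝ := fun x => (-3381513651486720) + (-845378412871680) * x ^ 2 + (-100290841804800) * x ^ 4 + (-14675689340928) * x ^ 6 + (-973945700352) * x ^ 8 + 36305584128 * x ^ 10 + 18216960 * x ^ 12 + (-351840) * x ^ 14 + (-4) * x ^ 16 + (1/8) * x ^ 18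

def qT02 : ℝ → ℝ := fun x => (-6584134533120) * x ^ 6 + 1674062069760 * x ^ 8 + (-19508428800) * x ^ 10 + (-51609600) * x ^ 12 + 115200 * x ^ 14

def dpT0 : ℝ → ℝ := fun x => (-73383542784) * x + 3146563584 * x ^ 5 + (-35942400) * x ^ 7 + (-487040) * x ^ 9 + (-364) * x ^ 11 + (7/8) * x ^ 13

def dqT0 : ℝ → ℝ := fun x => 44166021120 * x ^ 3 + (-3052339200) * x ^ 5 + 268800 * x ^ 9 + 480 * x ^ 11

def dpT01 : ℝ → ℝ := fun x => 8806025134080 * x + 3587639869440 * x ^ 3 + 221806854144 * x ^ 5 + (-36143235072) * x ^ 7 + 52346880 * x ^ 9 + 1374720 * x ^ 11 + 980 * x ^ 13 + 2 * x ^ 15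

def dqT01 : ℝ → ℝ := fun x => (-823016816640) * x ^ 5 + 24418713600 * x ^ 7 + 77414400 * x ^ 9 + (-460800) * x ^ 11

def qGd : ℝ → ℝ := fun x => (-4459069440) * x ^ 5 + 92897280 * x ^ 7

def qT1d : ℝ → ℝ := fun x => (-637009920) * x ^ 5 + 13271040 * x ^ 7

def qT0d : ℝ → ℝ := fun x => 11041505280 * x ^ 3 + (-508723200) * x ^ 5 + 26880 * x ^ 9 + 40 * x ^ 11

def pGs : ℝ → ℝ := fun x => 1 + 672 * x ^ 2 + 290304 * x ^ 4 + (-123088896) * x ^ 6 + 334430208 * x ^ 8 + 32105299968 * x ^ 10 + 171228266496 * x ^ 12 + 587068342272 * x ^ 14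

def qGs : ℝ → ℝ := fun x => 92897280 * x ^ 5 + (-4459069440) * x ^ 7

def pT1s : ℝ → ℝ := fun x => 41472 + (-16588800) * x ^ 2 + 47775744 * x ^ 4 + 4586471424 * x ^ 6 + 24461180928 * x ^ 8 + (587068342272/7) * x ^ 10

def qT1s : ℝ → ℝ := fun x => 13271040 * x + (-637009920) * x ^ 3

def pT0s : ℝ → ℝ := fun x => (1/16) + (-91/3) * x ^ 2 + (-48704) * x ^ 4 + (-4492800) * x ^ 6 + 524427264 * x ^ 8 + (-36691771392) * x ^ 12 + (-73383542784) * x ^ 14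

def qT0s : ℝ → ℝ := fun x => 40 * x + 26880 * x ^ 3 + (-508723200) * x ^ 7 + 11041505280 * x ^ 9

def pDd : ℝ → ℝ := fun x => (-6967296) + 672 * x ^ 4 + 1 * x ^ 6

lemma hd_pG (r : ℝ) : HasDerivAt pG (dpG r) r := by
  unfold pG dpG
  refine ((((((((hasDerivAt_const r (587068342272 : ℝ)).add ((hasDerivAt_pow 2 r).const_mul (171228266496 : ℝ))).add ((hasDerivAt_pow 4 r).const_mul (32105299968 : ℝ))).add ((hasDerivAt_pow 6 r).const_mul (334430208 : ℝ))).add ((hasDerivAt_pow 8 r).const_mul (-123088896 : ℝ))).add ((hasDerivAt_pow 10 r).const_mul (290304 : ℝ))).add ((hasDerivAt_pow 12 r).const_mul (672 : ℝ))).add ((hasDerivAt_pow 14 r).const_mul (1 : ℝ))).congr_deriv ?_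
  try push_cast
  try norm_num
  try ring

lemma hd_qG (r : ℝ) : HasDerivAt qG (dqG r) r := by
  unfold qG dqG
  refine (((hasDerivAt_pow 6 r).const_mul (-4459069440 : ℝ)).add ((hasDerivAt_pow 8 r).const_mul (92897280 : ℝ))).congr_deriv ?_
  try push_cast
  try norm_num
  try ring

lemma hd_pG1 (r : ℝ) : HasDerivAt pG1 (dpG1 r) r := by
  unfold pG1 dpG1
  refine ((((((((hasDerivAt_const r (-169075682574336 : ℝ)).add ((hasDerivAt_pow 2 r).const_mul (-41094783959040 : ℝ))).add ((hasDerivAt_pow 4 r).const_mul (-5136847994880 : ℝ))).add ((hasDerivAt_pow 6 r).const_mul (-535088332800 : ℝ))).add ((hasDerivAt_pow 8 r).const_mul (-14491975680 : ℝ))).add ((hasDerivAt_pow 10 r).const_mul (887169024 : ℝ))).add ((hasDerivAt_pow 12 r).const_mul (-967680 : ℝ))).add ((hasDerivAt_pow 14 r).const_mul (-960 : ℝ))).congr_deriv ?_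
  try push_cast
  try norm_num
  try ring

lemma hd_qG1 (r : ℝ) : HasDerivAt qG1 (dqG1 r) r := by
  unfold qG1 dqG1
  refine (((hasDerivAt_pow 8 r).const_mul (44590694400 : ℝ)).add ((hasDerivAt_pow 10 r).const_mul (-557383680 : ℝ))).congr_deriv ?_
  try push_cast
  try norm_num
  try ring

lemma hd_pT1 (r : ℝ) : HasDerivAt pT1 (dpT1 r) r := by
  unfold pT1 dpT1
  refine ((((((hasDerivAt_const r (587068342272/7 : ℝ)).add ((hasDerivAt_pow 2 r).const_mul (24461180928 : ℝ))).add ((hasDerivAt_pow 4 r).const_mul (4586471424 : ℝ))).add ((hasDerivAt_pow 6 r).const_mul (47775744 : ℝ))).add ((hasDerivAt_pow 8 r).const_mul (-16588800 : ℝ))).add ((hasDerivAt_pow 10 r).const_mul (41472 : ℝ))).congr_deriv ?_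
  try push_cast
  try norm_num
  try ring

lemma hd_qT1 (r : ℝ) : HasDerivAt qT1 (dqT1 r) r := by
  unfold qT1 dqT1
  refine (((hasDerivAt_pow 6 r).const_mul (-637009920 : ℝ)).add ((hasDerivAt_pow 8 r).const_mul (13271040 : ℝ))).congr_deriv ?_
  try push_cast
  try norm_num
  try ring

lemma hd_pT11 (r : ℝ) : HasDerivAt pT11 (dpT11 r) r := by
  unfold pT11 dpT11
  refine (((((((hasDerivAt_const r (-169075682574336/7 : ℝ)).add ((hasDerivAt_pow 2 r).const_mul (-5870683422720 : ℝ))).add ((hasDerivAt_pow 4 r).const_mul (-733835427840 : ℝ))).add ((hasDerivAt_pow 6 r).const_mul (-76441190400 : ℝ))).add ((hasDerivAt_pow 8 r).const_mul (-1974730752 : ℝ))).add ((hasDerivAt_pow 10 r).const_mul (120766464 : ℝ))).add ((hasDerivAt_pow 12 r).const_mul (-165888 : ℝ))).congr_deriv ?_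
  try push_cast
  try norm_num
  try ring

lemma hd_qT11 (r : ℝ) : HasDerivAt qT11 (dqT11 r) r := by
  unfold qT11 dqT11
  refine (((hasDerivAt_pow 8 r).const_mul (6370099200 : ℝ)).add ((hasDerivAt_pow 10 r).const_mul (-79626240 : ℝ))).congr_deriv ?_
  try push_cast
  try norm_num
  try ring

lemma hd_pT0 (r : ℝ) : HasDerivAt pT0 (dpT0 r) r := by
  unfold pT0 dpT0
  refine (((((((hasDerivAt_const r (-73383542784 : ℝ)).add ((hasDerivAt_pow 2 r).const_mul (-36691771392 : ℝ))).add ((hasDerivAt_pow 6 r).const_mul (524427264 : ℝ))).add ((hasDerivAt_pow 8 r).const_mul (-4492800 : ℝ))).add ((hasDerivAt_pow 10 r).const_mul (-48704 : ℝ))).add ((hasDerivAt_pow 12 r).const_mul (-91/3 : ℝ))).add ((hasDerivAt_pow 14 r).const_mul (1/16 : ℝ))).congr_deriv ?_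
  try push_cast
  try norm_num
  try ring

lemma hd_qT0 (r : ℝ) : HasDerivAt qT0 (dqT0 r) r := by
  unfold qT0 dqT0
  refine (((((hasDerivAt_pow 4 r).const_mul (11041505280 : ℝ)).add ((hasDerivAt_pow 6 r).const_mul (-508723200 : ℝ))).add ((hasDerivAt_pow 10 r).const_mul (26880 : ℝ))).add ((hasDerivAt_pow 12 r).const_mul (40 : ℝ))).congr_deriv ?_
  try push_cast
  try norm_num
  try ring

lemma hd_pT01 (r : ℝ) : HasDerivAt pT01 (dpT01 r) r := by
  unfold pT01 dpT01
  refine (((((((((hasDerivAt_const r (14089640214528 : ℝ)).add ((hasDerivAt_pow 2 r).const_mul (4403012567040 : ℝ))).add ((hasDerivAt_pow 4 r).const_mul (896909967360 : ℝ))).add ((hasDerivAt_pow 6 r).const_mul (36967809024 : ℝ))).add ((hasDerivAt_pow 8 r).const_mul (-4517904384 : ℝ))).add ((hasDerivAt_pow 10 r).const_mul (5234688 : ℝ))).add ((hasDerivAt_pow 12 r).const_mul (114560 : ℝ))).add ((hasDerivAt_pow 14 r).const_mul (70 : ℝ))).add ((hasDerivAt_pow 16 r).const_mul (1/8 : ℝ))).congr_deriv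 ?_
  try push_cast
  try norm_num
  try ring

lemma hd_qT01 (r : ℝ) : HasDerivAt qT01 (dqT01 r) r := by
  unfold qT01 dqT01
  refine (((((hasDerivAt_pow 6 r).const_mul (-137169469440 : ℝ)).add ((hasDerivAt_pow 8 r).const_mul (3052339200 : ℝ))).add ((hasDerivAt_pow 10 r).const_mul (7741440 : ℝ))).add ((hasDerivAt_pow 12 r).const_mul (-38400 : ℝ))).congr_deriv ?_
  try push_cast
  try norm_num
  try ring

def G8 : ℝ → ℝ := fun x => (pG x + qG x * Real.log x) / (x ^ 6 * (48 + x ^ 2) ^ 4)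
def G81 : ℝ → ℝ := fun x => (pG1 x + qG1 x * Real.log x) / (x ^ 7 * (48 + x ^ 2) ^ 5)
def G82 : ℝ → ℝ := fun x => (pG2 x + qG2 x * Real.log x) / (x ^ 8 * (48 + x ^ 2) ^ 6)
def T18 : ℝ → ℝ := fun x => (pT1 x + qT1 x * Real.log x) / (x ^ 6 * (48 + x ^ 2) ^ 4)
def T181 : ℝ → ℝ := fun x => (pT11 x + qT11 x * Real.log x) / (x ^ 7 * (48 + x ^ 2) ^ 5)
def T182 : ℝ → ℝ := fun x => (pT12 x + qT12 x * Real.log x) / (x ^ 8 * (48 + x ^ 2) ^ 6)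
def T08 : ℝ → ℝ := fun x => (pT0 x + qT0 x * Real.log x) / (x ^ 4 * (48 + x ^ 2) ^ 4)
def T081 : ℝ → ℝ := fun x => (pT01 x + qT01 x * Real.log x) / (x ^ 5 * (48 + x ^ 2) ^ 5)
def T082 : ℝ → ℝ := fun x => (pT02 x + qT02 x * Real.log x) / (x ^ 6 * (48 + x ^ 2) ^ 6)

lemma hasDerivAt_PQ (P Q dP dQ : ℝ → ℝ) (a m : ℕ) {r : ℝ} (hr : 0 < r)
    (hP : HasDerivAt P (dP r) r) (hQ : HasDerivAt Q (dQ r) r) :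
    HasDerivAt (fun x => (P x + Q x * Real.log x) / (x ^ (a + 1) * (48 + x ^ 2) ^ (m + 1)))
      (((dP r + (dQ r * Real.log r + Q r * r⁻¹)) * (r ^ (a + 1) * (48 + r ^ 2) ^ (m + 1)) -
        (P r + Q r * Real.log r) *
          ((((a : ℝ) + 1) * r ^ a) * (48 + r ^ 2) ^ (m + 1) +
            r ^ (a + 1) * ((((m : ℝ) + 1) * (48 + r ^ 2) ^ m) * (2 * r)))) /
        (r ^ (a + 1) * (48 + r ^ 2) ^ (m + 1)) ^ 2) r := by
  have hden : r ^ (a + 1) * (48 + r ^ 2) ^ (m + 1) ≠ 0 := by positivity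
  have hnum : HasDerivAt (fun x => P x + Q x * Real.log x)
      (dP r + (dQ r * Real.log r + Q r * r⁻¹)) r :=
    hP.add (hQ.mul (Real.hasDerivAt_log hr.ne'))
  have hd1 : HasDerivAt (fun x : ℝ => x ^ (a + 1)) (((a : ℝ) + 1) * r ^ a) r := by
    have := hasDerivAt_pow (a + 1) r
    simpa using this
  have h0 : HasDerivAt (fun x : ℝ => 48 + x ^ 2) (2 * r) r := by
    simpa using (hasDerivAt_pow 2 r).const_add (48 : ℝ)
  have hd2 : HasDerivAt (fun x : ℝ => (48 + x ^ 2) ^ (m + 1))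
      ((((m : ℝ) + 1) * (48 + r ^ 2) ^ m) * (2 * r)) r := by
    have := h0.pow (m + 1)
    simpa [Pi.pow_def] using this
  exact hnum.div (hd1.mul hd2) hden

lemma hC_ne {r : ℝ} : (48 : ℝ) + r ^ 2 ≠ 0 := by positivity

lemma hG81 {r : ℝ} (hr : 0 < r) : HasDerivAt G8 (G81 r) r := by
  have h := hasDerivAt_PQ pG qG dpG dqG 5 3 hr (hd_pG r) (hd_qG r)
  have h' : HasDerivAt G8 _ r := h
  convert h' using 1
  have h0 : r ≠ 0 := ne_of_gt hr
  have hC : (48 : ℝ) + r ^ 2 ≠ 0 := hC_ne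
  simp only [G81, pG1, qG1, pG, qG, dpG, dqG]
  push_cast
  field_simp
  ring

lemma hG82 {r : ℝ} (hr : 0 < r) : HasDerivAt G81 (G82 r) r := by
  have h := hasDerivAt_PQ pG1 qG1 dpG1 dqG1 6 4 hr (hd_pG1 r) (hd_qG1 r)
  have h' : HasDerivAt G81 _ r := h
  convert h' using 1
  have h0 : r ≠ 0 := ne_of_gt hr
  have hC : (48 : ℝ) + r ^ 2 ≠ 0 := hC_ne
  simp only [G82, pG2, qG2, pG1, qG1, dpG1, dqG1]
  push_cast
  field_simp
  ring

lemma hT181 {r : ℝ} (hr : 0 < r) : HasDerivAt T18 (T181 r) r := by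
  have h := hasDerivAt_PQ pT1 qT1 dpT1 dqT1 5 3 hr (hd_pT1 r) (hd_qT1 r)
  have h' : HasDerivAt T18 _ r := h
  convert h' using 1
  have h0 : r ≠ 0 := ne_of_gt hr
  have hC : (48 : ℝ) + r ^ 2 ≠ 0 := hC_ne
  simp only [T181, pT11, qT11, pT1, qT1, dpT1, dqT1]
  push_cast
  field_simp
  ring

lemma hT182 {r : ℝ} (hr : 0 < r) : HasDerivAt T181 (T182 r) r := by
  have h := hasDerivAt_PQ pT11 qT11 dpT11 dqT11 6 4 hr (hd_pT11 r) (hd_qT11 r)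
  have h' : HasDerivAt T181 _ r := h
  convert h' using 1
  have h0 : r ≠ 0 := ne_of_gt hr
  have hC : (48 : ℝ) + r ^ 2 ≠ 0 := hC_ne
  simp only [T182, pT12, qT12, pT11, qT11, dpT11, dqT11]
  push_cast
  field_simp
  ring

lemma hT081 {r : ℝ} (hr : 0 < r) : HasDerivAt T08 (T081 r) r := by
  have h := hasDerivAt_PQ pT0 qT0 dpT0 dqT0 3 3 hr (hd_pT0 r) (hd_qT0 r)
  have h' : HasDerivAt T08 _ r := h
  convert h' using 1
  have h0 : r ≠ 0 := ne_of_gt hr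
  have hC : (48 : ℝ) + r ^ 2 ≠ 0 := hC_ne
  simp only [T081, pT01, qT01, pT0, qT0, dpT0, dqT0]
  push_cast
  field_simp
  ring

lemma hT082 {r : ℝ} (hr : 0 < r) : HasDerivAt T081 (T082 r) r := by
  have h := hasDerivAt_PQ pT01 qT01 dpT01 dqT01 4 4 hr (hd_pT01 r) (hd_qT01 r)
  have h' : HasDerivAt T081 _ r := h
  convert h' using 1
  have h0 : r ≠ 0 := ne_of_gt hr
  have hC : (48 : ℝ) + r ^ 2 ≠ 0 := hC_ne
  simp only [T082, pT02, qT02, pT01, qT01, dpT01, dqT01]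
  push_cast
  field_simp
  ring

lemma deriv2_eq (f f1 f2 : ℝ → ℝ) (h1 : ∀ x : ℝ, 0 < x → HasDerivAt f (f1 x) x)
    (h2 : ∀ x : ℝ, 0 < x → HasDerivAt f1 (f2 x) x) {r : ℝ} (hr : 0 < r) :
    deriv f r = f1 r ∧ deriv (deriv f) r = f2 r := by
  refine ⟨(h1 r hr).deriv, ?_⟩
  have heq : deriv f =ᶠ[𝓝 r] f1 := by
    filter_upwards [eventually_gt_nhds hr] with x hx
    exact (h1 x hx).deriv
  rw [heq.deriv_eq]
  exact (h2 r hr).deriv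

lemma V8r_eq (r : ℝ) : V8r r = -3840 / (48 + r ^ 2) ^ 2 := by
  unfold V8r W8r
  have ht : (0 : ℝ) < 1 + r ^ 2 / 48 := by positivity
  have h1 : (((1 + r ^ 2 / 48 : ℝ) ^ 3)⁻¹) ^ ((2 : ℝ) / 3) = ((1 + r ^ 2 / 48 : ℝ) ^ 2)⁻¹ := by
    rw [← Real.rpow_natCast (1 + r ^ 2 / 48 : ℝ) 3, ← Real.rpow_neg ht.le,
      ← Real.rpow_mul ht.le]
    norm_num
  rw [h1]
  have hC : (48 : ℝ) + r ^ 2 ≠ 0 := hC_ne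
  have ht' : (1 + r ^ 2 / 48 : ℝ) ≠ 0 := ne_of_gt ht
  field_simp
  ring

lemma hW8 (r : ℝ) :
    HasDerivAt W8r (-(3 * (1 + r ^ 2 / 48) ^ 2 * (r / 24)) / ((1 + r ^ 2 / 48) ^ 3) ^ 2) r := by
  have hne : ((1 : ℝ) + r ^ 2 / 48) ^ 3 ≠ 0 := by positivity
  have h1 : HasDerivAt (fun x : ℝ => 1 + x ^ 2 / 48) (r / 24) r := by
    have := ((hasDerivAt_pow 2 r).div_const (48 : ℝ)).const_add (1 : ℝ)
    refine this.congr_deriv ?_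
    push_cast
    ring
  have h2 : HasDerivAt (fun x : ℝ => (1 + x ^ 2 / 48) ^ 3) (3 * (1 + r ^ 2 / 48) ^ 2 * (r / 24)) r := by
    have := h1.pow 3
    refine this.congr_deriv ?_
    try push_cast
    try norm_num
    try ring
  exact h2.inv hne

lemma LW8r_eq (r : ℝ) : LW8r r = 331776 * (48 - r ^ 2) / (48 + r ^ 2) ^ 4 := by
  unfold LW8r
  rw [(hW8 r).deriv]
  simp only [W8r]
  have ht' : (1 + r ^ 2 / 48 : ℝ) ≠ 0 := by positivity
  have hC : (48 : ℝ) + r ^ 2 ≠ 0 := hC_ne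
  field_simp
  ring

lemma odeG {r : ℝ} (hr : 0 < r) :
    -(deriv (deriv G8) r) - 7 / r * deriv G8 r + V8r r * G8 r = 0 := by
  obtain ⟨h1, h2⟩ := deriv2_eq G8 G81 G82 (fun x hx => hG81 hx) (fun x hx => hG82 hx) hr
  rw [h1, h2, V8r_eq]
  have h0 : r ≠ 0 := ne_of_gt hr
  have hC : (48 : ℝ) + r ^ 2 ≠ 0 := hC_ne
  simp only [G8, G81, G82, pG, qG, pG1, qG1, pG2, qG2]
  field_simp
  ring

lemma odeT1 {r : ℝ} (hr : 0 < r) :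
    -(deriv (deriv T18) r) - 7 / r * deriv T18 r + V8r r * T18 r = -LW8r r := by
  obtain ⟨h1, h2⟩ := deriv2_eq T18 T181 T182 (fun x hx => hT181 hx) (fun x hx => hT182 hx) hr
  rw [h1, h2, V8r_eq, LW8r_eq]
  have h0 : r ≠ 0 := ne_of_gt hr
  have hC : (48 : ℝ) + r ^ 2 ≠ 0 := hC_ne
  simp only [T18, T181, T182, pT1, qT1, pT11, qT11, pT12, qT12]
  field_simp
  ring

lemma odeT0 {r : ℝ} (hr : 0 < r) :
    -(deriv (deriv T08) r) - 7 / r * deriv T08 r + V8r r * T08 r = -G8 r := by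
  obtain ⟨h1, h2⟩ := deriv2_eq T08 T081 T082 (fun x hx => hT081 hx) (fun x hx => hT082 hx) hr
  rw [h1, h2, V8r_eq]
  have h0 : r ≠ 0 := ne_of_gt hr
  have hC : (48 : ℝ) + r ^ 2 ≠ 0 := hC_ne
  simp only [T08, T081, T082, pT0, qT0, pT01, qT01, pT02, qT02, G8, pG, qG]
  field_simp
  ring

lemma tendsto_zero_aux (p q : ℝ → ℝ) (hp : Continuous p) (hq : Continuous q) :
    Tendsto (fun r : ℝ => (p r + q r * (r * Real.log r)) / (48 + r ^ 2) ^ 4) (𝓝[>] (0 : ℝ))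
      (𝓝 (p 0 / 48 ^ 4)) := by
  have h1 : Tendsto (fun r : ℝ => r * Real.log r) (𝓝 (0 : ℝ)) (𝓝 0) := by
    have := Real.continuous_mul_log.tendsto 0
    simpa using this
  have h2 : Tendsto (fun r : ℝ => (p r + q r * (r * Real.log r)) / (48 + r ^ 2) ^ 4)
      (𝓝 (0 : ℝ)) (𝓝 ((p 0 + q 0 * 0) / (48 + 0 ^ 2) ^ 4)) := by
    refine Tendsto.div ((hp.tendsto 0).add ((hq.tendsto 0).mul h1)) ?_ (by norm_num)
    exact ((continuous_const.add (continuous_pow 2)).pow 4).tendsto 0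
  have h3 := h2.mono_left (nhdsWithin_le_nhds (s := Set.Ioi (0 : ℝ)))
  convert h3 using 2
  norm_num

lemma tendsto_top_aux (p q : ℝ → ℝ) (hp : Continuous p) (hq : Continuous q) :
    Tendsto (fun r : ℝ =>
        p r⁻¹ / (48 * r⁻¹ ^ 2 + 1) ^ 4 + Real.log r / r * (q r⁻¹ / (48 * r⁻¹ ^ 2 + 1) ^ 4))
      atTop (𝓝 (p 0)) := by
  have hinv : Tendsto (fun r : ℝ => r⁻¹) atTop (𝓝 0) := tendsto_inv_atTop_zero
  have hlog : Tendsto (fun r : ℝ => Real.log r / r) atTop (𝓝 0) := by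
    have := Real.tendsto_pow_log_div_mul_add_atTop 1 0 1 one_ne_zero
    simpa using this
  have hden : Tendsto (fun r : ℝ => (48 * r⁻¹ ^ 2 + 1) ^ 4) atTop (𝓝 ((48 * 0 ^ 2 + 1) ^ 4)) :=
    (((continuous_const.mul (continuous_pow 2)).add continuous_const).pow 4).tendsto 0 |>.comp hinv
  have hP : Tendsto (fun r : ℝ => p r⁻¹ / (48 * r⁻¹ ^ 2 + 1) ^ 4) atTop
      (𝓝 (p 0 / (48 * 0 ^ 2 + 1) ^ 4)) :=
    Tendsto.div ((hp.tendsto 0).comp hinv) hden (by norm_num)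
  have hQ : Tendsto (fun r : ℝ => q r⁻¹ / (48 * r⁻¹ ^ 2 + 1) ^ 4) atTop
      (𝓝 (q 0 / (48 * 0 ^ 2 + 1) ^ 4)) :=
    Tendsto.div ((hq.tendsto 0).comp hinv) hden (by norm_num)
  have := hP.add (hlog.mul hQ)
  convert this using 2
  norm_num

lemma limG0 : Tendsto (fun r => G8 r * r ^ 6) (𝓝[>] (0 : ℝ)) (𝓝 110592) := by
  have haux := tendsto_zero_aux pG qGd (by unfold pG; fun_prop) (by unfold qGd; fun_prop)
  have hval : pG 0 / 48 ^ 4 = (110592 : ℝ) := by norm_num [pG]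
  rw [hval] at haux
  refine haux.congr' ?_
  filter_upwards [self_mem_nhdsWithin] with r hr
  have h0 : r ≠ 0 := ne_of_gt hr
  have hC : (48 : ℝ) + r ^ 2 ≠ 0 := hC_ne
  simp only [G8, pG, qG, qGd]
  field_simp

lemma limT10 : Tendsto (fun r => T18 r * r ^ 6) (𝓝[>] (0 : ℝ)) (𝓝 (110592 / 7)) := by
  have haux := tendsto_zero_aux pT1 qT1d (by unfold pT1; fun_prop) (by unfold qT1d; fun_prop)
  have hval : pT1 0 / 48 ^ 4 = (110592 / 7 : ℝ) := by norm_num [pT1]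
  rw [hval] at haux
  refine haux.congr' ?_
  filter_upwards [self_mem_nhdsWithin] with r hr
  have h0 : r ≠ 0 := ne_of_gt hr
  have hC : (48 : ℝ) + r ^ 2 ≠ 0 := hC_ne
  simp only [T18, pT1, qT1, qT1d]
  field_simp

lemma limT00 : Tendsto (fun r => T08 r * r ^ 4) (𝓝[>] (0 : ℝ)) (𝓝 (-13824)) := by
  have haux := tendsto_zero_aux pT0 qT0d (by unfold pT0; fun_prop) (by unfold qT0d; fun_prop)
  have hval : pT0 0 / 48 ^ 4 = (-13824 : ℝ) := by norm_num [pT0]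
  rw [hval] at haux
  refine haux.congr' ?_
  filter_upwards [self_mem_nhdsWithin] with r hr
  have h0 : r ≠ 0 := ne_of_gt hr
  have hC : (48 : ℝ) + r ^ 2 ≠ 0 := hC_ne
  simp only [T08, pT0, qT0, qT0d]
  field_simp

lemma limD0 : Tendsto (fun r => (G8 r - 7 * T18 r) / r ^ 2) (𝓝[>] (0 : ℝ)) (𝓝 (-21 / 16)) := by
  have hc : Tendsto (fun r : ℝ => pDd r / (48 + r ^ 2) ^ 4) (𝓝 (0 : ℝ))
      (𝓝 (pDd 0 / (48 + 0 ^ 2) ^ 4)) := by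
    refine Tendsto.div ?_ ?_ (by norm_num)
    · exact (show Continuous pDd by unfold pDd; fun_prop).tendsto 0
    · exact ((continuous_const.add (continuous_pow 2)).pow 4).tendsto 0
  have hval : pDd 0 / ((48 : ℝ) + 0 ^ 2) ^ 4 = (-21 / 16 : ℝ) := by norm_num [pDd]
  rw [hval] at hc
  refine (hc.mono_left nhdsWithin_le_nhds).congr' ?_
  filter_upwards [self_mem_nhdsWithin] with r hr
  have h0 : r ≠ 0 := ne_of_gt hr
  have hC : (48 : ℝ) + r ^ 2 ≠ 0 := hC_ne
  simp only [G8, T18, pG, qG, pT1, qT1, pDd]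
  field_simp
  ring

lemma limGtop : Tendsto G8 atTop (𝓝 1) := by
  have haux := tendsto_top_aux pGs qGs (by unfold pGs; fun_prop) (by unfold qGs; fun_prop)
  have hval : pGs 0 = (1 : ℝ) := by norm_num [pGs]
  rw [hval] at haux
  refine haux.congr' ?_
  filter_upwards [eventually_gt_atTop (0 : ℝ)] with r hr
  have h0 : r ≠ 0 := ne_of_gt hr
  have hC : (48 : ℝ) + r ^ 2 ≠ 0 := hC_ne
  simp only [G8, pG, qG, pGs, qGs]
  field_simp
  ring

lemma limT1top : Tendsto (fun r => T18 r * r ^ 4) atTop (𝓝 41472) := by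
  have haux := tendsto_top_aux pT1s qT1s (by unfold pT1s; fun_prop) (by unfold qT1s; fun_prop)
  have hval : pT1s 0 = (41472 : ℝ) := by norm_num [pT1s]
  rw [hval] at haux
  refine haux.congr' ?_
  filter_upwards [eventually_gt_atTop (0 : ℝ)] with r hr
  have h0 : r ≠ 0 := ne_of_gt hr
  have hC : (48 : ℝ) + r ^ 2 ≠ 0 := hC_ne
  simp only [T18, pT1, qT1, pT1s, qT1s]
  field_simp
  ring

lemma limT0top : Tendsto (fun r => T08 r / r ^ 2) atTop (𝓝 (1 / 16)) := by
  have haux := tendsto_top_aux pT0s qT0s (by unfold pT0s; fun_prop) (by unfold qT0s; fun_prop)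
  have hval : pT0s 0 = (1 / 16 : ℝ) := by norm_num [pT0s]
  rw [hval] at haux
  refine haux.congr' ?_
  filter_upwards [eventually_gt_atTop (0 : ℝ)] with r hr
  have h0 : r ≠ 0 := ne_of_gt hr
  have hC : (48 : ℝ) + r ^ 2 ≠ 0 := hC_ne
  simp only [T08, pT0, qT0, pT0s, qT0s]
  field_simp
  ring

/-- Generalized kernel of `-Δ + V` in eight dimensions, in the radial setting. -/
theorem stmt18 :
    ∃ (G T1i T10 : ℝ → ℝ) (c c' ci0 cii c00 c0i E0 ct : ℝ),
      c ≠ 0 ∧ c' ≠ 0 ∧ ci0 ≠ 0 ∧ cii ≠ 0 ∧ c00 ≠ 0 ∧ c0i ≠ 0 ∧ E0 ≠ 0 ∧ ct ≠ 0 ∧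
      (∀ r : ℝ, 0 < r →
        -(deriv (deriv G) r) - 7 / r * deriv G r + V8r r * G r = 0) ∧
      Tendsto (fun r => G r * r ^ 6) (𝓝[>] (0 : ℝ)) (𝓝 c) ∧
      Tendsto G atTop (𝓝 c') ∧
      (∀ r : ℝ, 0 < r →
        -(deriv (deriv T1i) r) - 7 / r * deriv T1i r + V8r r * T1i r = -LW8r r) ∧
      (∀ r : ℝ, 0 < r →
        -(deriv (deriv T10) r) - 7 / r * deriv T10 r + V8r r * T10 r = -G r) ∧
      Tendsto (fun r => T1i r * r ^ 4) atTop (𝓝 cii) ∧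
      Tendsto (fun r => T1i r * r ^ 6) (𝓝[>] (0 : ℝ)) (𝓝 ci0) ∧
      Tendsto (fun r => T10 r / r ^ 2) atTop (𝓝 c0i) ∧
      Tendsto (fun r => T10 r * r ^ 4) (𝓝[>] (0 : ℝ)) (𝓝 c00) ∧
      Tendsto (fun r => (G r - E0 * T1i r) / r ^ 2) (𝓝[>] (0 : ℝ)) (𝓝 ct) := by
  refine ⟨G8, T18, T08, 110592, 1, 110592 / 7, 41472, -13824, 1 / 16, 7, -21 / 16,
    by norm_num, by norm_num, by norm_num, by norm_num, by norm_num, by norm_num,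
    by norm_num, by norm_num,
    fun r hr => odeG hr, limG0, limGtop, fun r hr => odeT1 hr, fun r hr => odeT0 hr,
    limT1top, limT10, limT0top, limT00, limD0⟩

end
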